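/- If n ≡ 2 (mod 3) with n ≥ 5, then the minimum size of a 2-monopoly in C_n □ C_n is at most (n+1)²/3 − 1. -/
import Mathlib


open SimpleGraph

/-- `M` is a `t`-monopoly in `G`: every vertex outside `M` has at least `t` neighbors in `M`. -/
def IsMonopoly {V : Type*} (G : SimpleGraph V) (t : ℕ) (M : Set V) : Prop :=
  ∀ v ∉ M, t ≤ (G.neighborSet v ∩ M).ncard

/-- The `t`-monopoly number: least cardinality of a `t`-monopoly. -/
noncomputable def monNum {V : Type*} (G : SimpleGraph V) (t : ℕ) : ℕ :=
  sInf {k | ∃ M : Set V, IsMonopoly G t M ∧ M.ncard = k}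


def Qp (N a b : ℕ) : Prop :=
  (a + b) % 3 = 0 ∨ (a = N - 1 ∧ b % 3 = 1) ∨ (b = N - 1 ∧ a % 3 = 1)

instance (N a b : ℕ) : Decidable (Qp N a b) := by unfold Qp; exact inferInstance

lemma cnt (p k : ℕ) :
    ((Finset.range k).filter (fun j => (p + j) % 3 = 0)).card
      = (k + 2 - (3 - p % 3) % 3) / 3 := by
  induction k with
  | zero => simp; omega
  | succ k ih =>
    rw [Finset.range_add_one, Finset.filter_insert]
    by_cases h : (p + k) % 3 = 0
    · rw [if_pos h, Finset.card_insert_of_notMem (by simp)]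
      omega
    · rw [if_neg h]; omega

lemma row (m a : ℕ) (ha : a < 3*m+2) :
    ((Finset.range (3*m+2)).filter (Qp (3*m+2) a)).card
      = if a = 3*m+1 then 2*m+1 else m+1 := by
  by_cases h1 : a = 3*m+1
  · subst h1
    rw [Finset.filter_congr (q := fun j => (1 + j) % 3 = 0 ∨ (2 + j) % 3 = 0)
        (fun j _ => by unfold Qp; omega),
      Finset.filter_or,
      Finset.card_union_of_disjoint (by
        rw [Finset.disjoint_left]
        intro x hx hx'
        simp only [Finset.mem_filter] at hx hx'
        omega),
      cnt, cnt, if_pos rfl]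
    omega
  · by_cases h2 : a % 3 = 1
    · rw [Finset.filter_congr (q := fun j => (a + j) % 3 = 0 ∨ j = 3*m+1)
          (fun j _ => by unfold Qp; omega),
        Finset.filter_or,
        Finset.card_union_of_disjoint (by
          rw [Finset.disjoint_left]
          intro x hx hx'
          simp only [Finset.mem_filter] at hx hx'
          omega),
        cnt, Finset.filter_eq', if_pos (by simp), Finset.card_singleton, if_neg h1]
      omega
    · rw [Finset.filter_congr (q := fun j => (a + j) % 3 = 0)
          (fun j _ => by unfold Qp; omega), cnt, if_neg h1]
      omega

lemma fin_count (n : ℕ) (p : ℕ → Prop) [DecidablePred p] :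
    (Finset.univ.filter (fun j : Fin n => p j.val)).card
      = ((Finset.range n).filter p).card := by
  rw [Finset.card_filter, Finset.card_filter]
  exact Fin.sum_univ_eq_sum_range (fun j => if p j then 1 else 0) n

lemma card_M (m : ℕ) :
    (Finset.univ.filter (fun v : Fin (3*m+2) × Fin (3*m+2) => Qp (3*m+2) v.1.val v.2.val)).card
      = (3*m+1)*(m+1) + (2*m+1) := by
  rw [Finset.card_filter, Fintype.sum_prod_type]
  have step : ∀ i : Fin (3*m+2),
      (∑ j : Fin (3*m+2), if Qp (3*m+2) i.val j.val then 1 else 0)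
        = if i.val = 3*m+1 then 2*m+1 else m+1 := by
    intro i
    rw [← Finset.card_filter, fin_count (3*m+2) (Qp (3*m+2) i.val), row m i.val i.isLt]
  rw [Finset.sum_congr rfl (fun i _ => step i),
    Fin.sum_univ_eq_sum_range (fun a => if a = 3*m+1 then 2*m+1 else m+1) (3*m+2),
    show (3*m+2) = (3*m+1)+1 from rfl, Finset.sum_range_succ, if_pos rfl,
    Finset.sum_congr rfl (fun a ha => if_neg (by simp at ha; omega)),
    Finset.sum_const, Finset.card_range, smul_eq_mul]


lemma two_le_ncard_of {α : Type*} {S : Set α} (hfin : S.Finite) {x y : α}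
    (hxy : x ≠ y) (hx : x ∈ S) (hy : y ∈ S) : 2 ≤ S.ncard := by
  have h := Set.ncard_le_ncard
    (Set.insert_subset hx (Set.singleton_subset_iff.2 hy) : ({x, y} : Set α) ⊆ S) hfin
  rwa [Set.ncard_pair hxy] at h

lemma mono_M (N : ℕ) (hN5 : 5 ≤ N) (h3 : N % 3 = 2) :
    IsMonopoly ((cycleGraph N).boxProd (cycleGraph N)) 2
      (↑(Finset.univ.filter
          (fun v : Fin N × Fin N => Qp N v.1.val v.2.val))) := by
  haveI : NeZero N := ⟨by omega⟩
  have hone : (1 : Fin N).val = 1 := by rw [Fin.val_one']; exact Nat.mod_eq_of_lt (by omega)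
  have adj_up : ∀ x : Fin N, (cycleGraph N).Adj x (x + 1) := fun x =>
    cycleGraph_adj'.2 (Or.inr (by rw [add_sub_cancel_left]; exact hone))
  have adj_down : ∀ x : Fin N, (cycleGraph N).Adj x (x - 1) := fun x =>
    cycleGraph_adj'.2 (Or.inl (by rw [sub_sub_cancel]; exact hone))
  have val_add : ∀ x : Fin N, (x + 1).val = (x.val + 1) % N := fun x => by
    rw [Fin.val_add, hone]
  have val_sub : ∀ x : Fin N, (x - 1).val = (x.val + (N - 1)) % N := fun x => by
    rw [Fin.sub_def]; simp only [hone, Nat.add_comm]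
  have modcalc : ∀ x : ℕ, x < N → (x + N) % N = x := fun x hx => by
    rw [Nat.add_mod_right]; exact Nat.mod_eq_of_lt hx
  rintro ⟨i, j⟩ hv
  simp only [Finset.coe_filter, Finset.mem_univ, true_and, Set.mem_setOf_eq] at hv
  unfold Qp at hv
  set a := i.val with hai
  set b := j.val with hbj
  have ha : a < N := i.isLt
  have hb : b < N := j.isLt
  -- helper for membership
  have memM : ∀ x y : Fin N, Qp N x.val y.val →
      ((x, y) ∈ (↑(Finset.univ.filter
        (fun v : Fin N × Fin N => Qp N v.1.val v.2.val)) : Set (Fin N × Fin N))) := by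
    intro x y hw
    simp only [Finset.coe_filter, Finset.mem_univ, true_and, Set.mem_setOf_eq]
    exact hw
  have hfin : ((cycleGraph N □ cycleGraph N).neighborSet (i, j) ∩
      ↑(Finset.univ.filter
        (fun v : Fin N × Fin N => Qp N v.1.val v.2.val))).Finite := Set.toFinite _
  by_cases hs : (a + b) % 3 = 1
  · by_cases ha0 : a = 0
    · -- neighbors (i-1, j) ∈ B and (i, j-1) ∈ D
      have hb1 : b % 3 = 1 := by omega
      have v1 : (i - 1).val = N - 1 := by
        rw [val_sub, ← hai, ha0, Nat.zero_add]; exact Nat.mod_eq_of_lt (by omega)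
      have v2 : (j - 1).val = b - 1 := by
        rw [val_sub, ← hbj, show b + (N - 1) = (b - 1) + N by omega, modcalc _ (by omega)]
      refine two_le_ncard_of hfin (x := (i - 1, j)) (y := (i, j - 1)) ?_ ?_ ?_
      · intro h
        have := congrArg (fun p : Fin N × Fin N => p.1.val) h
        simp only [v1, ← hai, ha0] at this
        omega
      · exact ⟨(boxProd_adj).2 (Or.inl ⟨adj_down i, rfl⟩), memM _ _ (by
          rw [Qp, v1]; omega)⟩
      · exact ⟨(boxProd_adj).2 (Or.inr ⟨adj_down j, rfl⟩), memM _ _ (by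
          rw [Qp, v2]; omega)⟩
    · by_cases hb0 : b = 0
      · -- neighbors (i-1, j) ∈ D and (i, j-1) ∈ C
        have ha1 : a % 3 = 1 := by omega
        have v1 : (i - 1).val = a - 1 := by
          rw [val_sub, ← hai, show a + (N - 1) = (a - 1) + N by omega, modcalc _ (by omega)]
        have v2 : (j - 1).val = N - 1 := by
          rw [val_sub, ← hbj, hb0, Nat.zero_add]; exact Nat.mod_eq_of_lt (by omega)
        refine two_le_ncard_of hfin (x := (i - 1, j)) (y := (i, j - 1)) ?_ ?_ ?_
        · intro h
          have := congrArg (fun p : Fin N × Fin N => p.1.val) h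
          simp only [v1, ← hai] at this
          omega
        · exact ⟨(boxProd_adj).2 (Or.inl ⟨adj_down i, rfl⟩), memM _ _ (by
            rw [Qp, v1]; omega)⟩
        · exact ⟨(boxProd_adj).2 (Or.inr ⟨adj_down j, rfl⟩), memM _ _ (by
            rw [Qp, v2]; omega)⟩
      · -- neighbors (i-1, j) and (i, j-1), both ∈ D
        have v1 : (i - 1).val = a - 1 := by
          rw [val_sub, ← hai, show a + (N - 1) = (a - 1) + N by omega, modcalc _ (by omega)]
        have v2 : (j - 1).val = b - 1 := by
          rw [val_sub, ← hbj, show b + (N - 1) = (b - 1) + N by omega, modcalc _ (by omega)]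
        refine two_le_ncard_of hfin (x := (i - 1, j)) (y := (i, j - 1)) ?_ ?_ ?_
        · intro h
          have := congrArg (fun p : Fin N × Fin N => p.1.val) h
          simp only [v1, ← hai] at this
          omega
        · exact ⟨(boxProd_adj).2 (Or.inl ⟨adj_down i, rfl⟩), memM _ _ (by
            rw [Qp, v1]; omega)⟩
        · exact ⟨(boxProd_adj).2 (Or.inr ⟨adj_down j, rfl⟩), memM _ _ (by
            rw [Qp, v2]; omega)⟩
  · -- (a+b)%3 = 2, and a < N-1, b < N-1; neighbors (i+1, j), (i, j+1) ∈ D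
    have hs2 : (a + b) % 3 = 2 := by omega
    have haN : a < N - 1 := by
      rcases Nat.lt_or_ge a (N - 1) with h | h
      · exact h
      · exfalso; omega
    have hbN : b < N - 1 := by
      rcases Nat.lt_or_ge b (N - 1) with h | h
      · exact h
      · exfalso; omega
    have v1 : (i + 1).val = a + 1 := by
      rw [val_add, ← hai]; exact Nat.mod_eq_of_lt (by omega)
    have v2 : (j + 1).val = b + 1 := by
      rw [val_add, ← hbj]; exact Nat.mod_eq_of_lt (by omega)
    refine two_le_ncard_of hfin (x := (i + 1, j)) (y := (i, j + 1)) ?_ ?_ ?_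
    · intro h
      have := congrArg (fun p : Fin N × Fin N => p.1.val) h
      simp only [v1, ← hai] at this
      omega
    · exact ⟨(boxProd_adj).2 (Or.inl ⟨adj_up i, rfl⟩), memM _ _ (by
        rw [Qp, v1]; omega)⟩
    · exact ⟨(boxProd_adj).2 (Or.inr ⟨adj_up j, rfl⟩), memM _ _ (by
        rw [Qp, v2]; omega)⟩

theorem mon2_torus_mod2 (n : ℕ) (hn : 5 ≤ n) (h3 : n % 3 = 2) :
    monNum ((cycleGraph n).boxProd (cycleGraph n)) 2 ≤ (n + 1) ^ 2 / 3 - 1 := by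
  obtain ⟨m, rfl⟩ : ∃ m, n = 3*m+2 := ⟨n/3, by omega⟩
  have h1 : monNum ((cycleGraph (3*m+2)).boxProd (cycleGraph (3*m+2))) 2 ≤
      ((Finset.univ.filter
        (fun v : Fin (3*m+2) × Fin (3*m+2) => Qp (3*m+2) v.1.val v.2.val) : Finset _) :
          Set (Fin (3*m+2) × Fin (3*m+2))).ncard :=
    Nat.sInf_le ⟨_, mono_M (3*m+2) (by omega) (by omega), rfl⟩
  rw [Set.ncard_coe_finset, card_M m] at h1
  have h2 : (3*m+2+1)^2/3 - 1 = (3*m+1)*(m+1)+(2*m+1) := by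
    have e1 : (3*m+2+1)^2 = 3*((3*m+1)*(m+1)+(2*m+1)+1) := by ring
    rw [e1, Nat.mul_div_cancel_left _ (by norm_num : 0 < 3)]
    exact Nat.add_sub_cancel _ _
  rw [h2]
  exact h1
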